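/- Let v₁,…,v_s ∈ ℝⁿ be vectors whose ℤ-span Λ is a nonzero lattice, let λ = √(λ₁(Λ)), let t ∈ ℤ_{≥1}, and for each i let w_i be a t-approximation of v_i. Equip ℤ^s with the quadratic form q(x) = ‖x‖² + ‖Σ_i x_i w_i‖²·t². Let ω ∈ ℤ_{≥1} be such that t ≥ (ns+1)·√ω/λ. Then every x ∈ ℤ^s with q(x) ≤ ω satisfies Σ_i x_i v_i = 0. -/

import Mathlib

lemma euc_norm_le_of_abs_le {n : ℕ} (y : EuclideanSpace ℝ (Fin n)) (c : ℝ)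
    (hc : 0 ≤ c) (h : ∀ j, |y j| ≤ c) : ‖y‖ ≤ Real.sqrt n * c := by
  rw [EuclideanSpace.norm_eq]
  have h1 : ∑ j, ‖y j‖ ^ 2 ≤ ∑ _j : Fin n, c ^ 2 := by
    apply Finset.sum_le_sum
    intro j _
    have := h j
    rw [Real.norm_eq_abs]
    nlinarith [abs_nonneg (y j)]
  calc Real.sqrt (∑ j, ‖y j‖ ^ 2) ≤ Real.sqrt (∑ _j : Fin n, c ^ 2) :=
        Real.sqrt_le_sqrt h1
    _ = Real.sqrt ((n : ℝ) * c ^ 2) := by rw [Finset.sum_const, Finset.card_fin]; ring_nf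
    _ = Real.sqrt n * c := by
        rw [Real.sqrt_mul (Nat.cast_nonneg n), Real.sqrt_sq hc]

theorem stmt_2 (n s : ℕ) (v w : Fin s → EuclideanSpace ℝ (Fin n))
    (hΛ : Submodule.span ℤ (Set.range v) ≠ ⊥)
    (hdisc : ∃ ε : ℝ, 0 < ε ∧
      ∀ x ∈ Submodule.span ℤ (Set.range v), x ≠ 0 → ε ≤ ‖x‖ ^ 2)
    (lam : ℝ) (hlam : lam = Real.sqrt
      (sInf {r : ℝ | ∃ x ∈ Submodule.span ℤ (Set.range v), x ≠ 0 ∧ r = ‖x‖ ^ 2}))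
    (t : ℕ) (ht : 1 ≤ t)
    (happrox : ∀ i : Fin s, ∀ j : Fin n,
      (∃ m : ℤ, w i j = (m : ℝ) / t) ∧ |v i j - w i j| ≤ 1 / t)
    (ω : ℕ) (hω : 1 ≤ ω)
    (htω : ((n * s + 1 : ℕ) : ℝ) * Real.sqrt ω / lam ≤ t)
    (x : Fin s → ℤ)
    (hx : (∑ i : Fin s, (x i : ℝ) ^ 2) +
      ‖∑ i : Fin s, (x i : ℝ) • w i‖ ^ 2 * (t : ℝ) ^ 2 ≤ ω) :
    ∑ i : Fin s, (x i : ℝ) • v i = 0 := by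
  by_cases hx0 : x = 0
  · subst hx0; simp
  -- setup
  set S : Set ℝ := {r : ℝ | ∃ x ∈ Submodule.span ℤ (Set.range v), x ≠ 0 ∧ r = ‖x‖ ^ 2} with hS
  obtain ⟨ε, hε, hεS⟩ := hdisc
  have hSlb : ∀ r ∈ S, ε ≤ r := by
    rintro r ⟨y, hy, hy0, rfl⟩; exact hεS y hy hy0
  have hSne : S.Nonempty := by
    obtain ⟨y, hy, hy0⟩ := (Submodule.ne_bot_iff _).mp hΛ
    exact ⟨‖y‖ ^ 2, y, hy, hy0, rfl⟩
  have hbdd : BddBelow S := ⟨ε, hSlb⟩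
  have hInf_pos : 0 < sInf S := lt_of_lt_of_le hε (le_csInf hSne hSlb)
  have hlam_pos : 0 < lam := hlam ▸ Real.sqrt_pos.mpr hInf_pos
  have hlam_sq : lam ^ 2 = sInf S := by
    rw [hlam, Real.sq_sqrt hInf_pos.le]
  have ht0 : (0:ℝ) < t := by exact_mod_cast ht
  have hω0 : (0:ℝ) < ω := by exact_mod_cast hω
  have hω1 : (1:ℝ) ≤ ω := by exact_mod_cast hω
  have hsqω : (0:ℝ) < Real.sqrt ω := Real.sqrt_pos.mpr hω0
  -- sum of squares ≥ 1
  obtain ⟨i0, hi0⟩ : ∃ i, x i ≠ 0 := by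
    by_contra h; push_neg at h; exact hx0 (funext h)
  have hsum_sq_nonneg : ∀ i ∈ Finset.univ, (0:ℝ) ≤ (x i : ℝ) ^ 2 := fun i _ => sq_nonneg _
  have hone : (1:ℝ) ≤ ∑ i : Fin s, (x i : ℝ) ^ 2 := by
    have h1 : (1:ℝ) ≤ (x i0 : ℝ) ^ 2 := by
      have : 1 ≤ (x i0) ^ 2 := by
        rcases lt_or_gt_of_ne hi0 with h | h <;> nlinarith
      exact_mod_cast this
    calc (1:ℝ) ≤ (x i0 : ℝ) ^ 2 := h1
      _ ≤ ∑ i : Fin s, (x i : ℝ) ^ 2 :=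
        Finset.single_le_sum hsum_sq_nonneg (Finset.mem_univ i0)
  -- each |x i| ≤ √ω
  have habs : ∀ i, |(x i : ℝ)| ≤ Real.sqrt ω := by
    intro i
    have h1 : (x i : ℝ) ^ 2 ≤ ω := by
      have := Finset.single_le_sum hsum_sq_nonneg (Finset.mem_univ i)
      nlinarith [norm_nonneg (∑ i : Fin s, (x i : ℝ) • w i), sq_nonneg (‖∑ i : Fin s, (x i : ℝ) • w i‖ * t)]
    calc |(x i : ℝ)| = Real.sqrt ((x i :ℝ)^2) := (Real.sqrt_sq_eq_abs _).symm
      _ ≤ Real.sqrt ω := Real.sqrt_le_sqrt h1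
  -- bound on ‖Σ x w‖
  have hB : ‖∑ i : Fin s, (x i : ℝ) • w i‖ ≤ Real.sqrt (ω - 1) / t := by
    have h1 : ‖∑ i : Fin s, (x i : ℝ) • w i‖ ^ 2 * (t:ℝ)^2 ≤ (ω:ℝ) - 1 := by linarith
    have h2 : ‖∑ i : Fin s, (x i : ℝ) • w i‖ ^ 2 ≤ ((ω:ℝ) - 1) / (t:ℝ)^2 := by
      rw [le_div_iff₀ (by positivity)]; linarith
    have h3 := Real.sqrt_le_sqrt h2
    have h4 : Real.sqrt (((ω:ℝ) - 1) / (t:ℝ)^2) = Real.sqrt ((ω:ℝ)-1) / t := by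
      rw [Real.sqrt_div (by linarith), Real.sqrt_sq ht0.le]
    rwa [Real.sqrt_sq (norm_nonneg _), h4] at h3
  -- bound on the error term
  have herr : ‖∑ i : Fin s, (x i : ℝ) • (v i - w i)‖ ≤ (n:ℝ) * s * Real.sqrt ω / t := by
    have key : ∀ j : Fin n, |(∑ i : Fin s, (x i : ℝ) • (v i - w i)) j| ≤ (s:ℝ) * Real.sqrt ω / t := by
      intro j
      have happ : (∑ i : Fin s, (x i : ℝ) • (v i - w i)) j
          = ∑ i : Fin s, (x i : ℝ) * (v i j - w i j) := by
        induction (Finset.univ : Finset (Fin s)) using Finset.induction with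
        | empty => simp
        | insert _ _ h ih => rw [Finset.sum_insert h, Finset.sum_insert h, ← ih]; rfl
      rw [happ]
      calc |∑ i : Fin s, (x i : ℝ) * (v i j - w i j)|
          ≤ ∑ i : Fin s, |(x i : ℝ) * (v i j - w i j)| := Finset.abs_sum_le_sum_abs _ _
        _ ≤ ∑ _i : Fin s, Real.sqrt ω * (1 / t) := by
            apply Finset.sum_le_sum
            intro i _
            rw [abs_mul]
            exact mul_le_mul (habs i) ((happrox i j).2) (abs_nonneg _) hsqω.le
        _ = (s:ℝ) * Real.sqrt ω / t := by
            rw [Finset.sum_const, Finset.card_fin]; ring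
    have h2 := euc_norm_le_of_abs_le _ _ (by positivity) key
    calc ‖∑ i : Fin s, (x i : ℝ) • (v i - w i)‖
        ≤ Real.sqrt n * ((s:ℝ) * Real.sqrt ω / t) := h2
      _ ≤ (n:ℝ) * ((s:ℝ) * Real.sqrt ω / t) := by
          apply mul_le_mul_of_nonneg_right _ (by positivity)
          rcases Nat.eq_zero_or_pos n with h | h
          · simp [h]
          · have h1 : (1:ℝ) ≤ n := by exact_mod_cast h
            calc Real.sqrt n ≤ Real.sqrt ((n:ℝ)^2) := Real.sqrt_le_sqrt (by nlinarith)
              _ = n := Real.sqrt_sq (by positivity)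
      _ = (n:ℝ) * s * Real.sqrt ω / t := by ring
  -- main contradiction
  by_contra hu0
  set u : EuclideanSpace ℝ (Fin n) := ∑ i : Fin s, (x i : ℝ) • v i with hu
  have hu_mem : u ∈ Submodule.span ℤ (Set.range v) := by
    apply Submodule.sum_mem
    intro i _
    rw [Int.cast_smul_eq_zsmul ℝ]
    exact Submodule.smul_mem _ _ (Submodule.subset_span ⟨i, rfl⟩)
  have hInf_le : sInf S ≤ ‖u‖ ^ 2 := csInf_le hbdd ⟨u, hu_mem, hu0, rfl⟩
  have hsplit : u = (∑ i : Fin s, (x i : ℝ) • w i) + ∑ i : Fin s, (x i : ℝ) • (v i - w i) := by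
    rw [hu, ← Finset.sum_add_distrib]
    congr 1; funext i; rw [← smul_add]; congr 1; abel
  have hnorm_u : ‖u‖ ≤ Real.sqrt (ω-1)/t + (n:ℝ) * s * Real.sqrt ω / t := by
    rw [hsplit]
    exact le_trans (norm_add_le _ _) (add_le_add hB herr)
  have hstrict : Real.sqrt (ω - 1) < Real.sqrt ω := by
    exact Real.sqrt_lt_sqrt (by linarith) (by linarith)
  have hlt : ‖u‖ < lam := by
    have h1 : ((n*s+1:ℕ):ℝ) * Real.sqrt ω / t ≤ lam := by
      rw [div_le_iff₀ hlam_pos] at htω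
      rw [div_le_iff₀ ht0]
      calc ((n*s+1:ℕ):ℝ) * Real.sqrt ω ≤ t * lam := htω
        _ = lam * t := by ring
    have h2 : ((n*s+1:ℕ):ℝ) = (n:ℝ)*s + 1 := by push_cast; ring
    calc ‖u‖ ≤ Real.sqrt (ω-1)/t + (n:ℝ) * s * Real.sqrt ω / t := hnorm_u
      _ < Real.sqrt ω / t + (n:ℝ) * s * Real.sqrt ω / t := by
          gcongr
      _ = ((n:ℝ)*s + 1) * Real.sqrt ω / t := by ring
      _ = ((n*s+1:ℕ):ℝ) * Real.sqrt ω / t := by rw [h2]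
      _ ≤ lam := h1
  have : ‖u‖ ^ 2 < lam ^ 2 := by nlinarith [norm_nonneg u]
  rw [hlam_sq] at this
  linarith
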